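/- Theorem 3.1 (NPDo Ansatz for the block-diagonal objective). Let f and the partial Euclidean gradients ℋ_ℓ be as defined in the context. Let (P_1,…,P_m) be any tuple with P_i ∈ ℂ^{n_i×k_i} (not necessarily orthonormal), fix a mode 1 ≤ ℓ ≤ m, and let P̂_ℓ ∈ ℂ^{n_ℓ×k_ℓ} and η ∈ ℝ. If Re tr(P̂_ℓ^H ℋ_ℓ(P_1,…,P_m)) ≥ Re tr(P_ℓ^H ℋ_ℓ(P_1,…,P_m)) + η, then f(P_1,…,P_{ℓ-1}, P̂_ℓ, P_{ℓ+1},…,P_m) ≥ f(P_1,…,P_{ℓ-1}, P_ℓ, P_{ℓ+1},…,P_m) + η. -/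
import Mathlib


open Matrix Filter Topology
open scoped ComplexOrder Classical

/-- The entries of the multi-mode product `B ×₁ P₁ᴴ ×₂ ⋯ ×ₘ Pₘᴴ` of an `m`-mode tensor
`B` of size `n 0 × ⋯ × n (m-1)` with the conjugate transposes of the matrices `P ℓ`.
The column index set of `P ℓ` is `(s : Fin t) × Fin (κ ℓ s)`, encoding the partition of
`k ℓ = Σ s, κ ℓ s` into `t` blocks (block `s` has the indices with first component `s`). -/
noncomputable def multiProd {m t : ℕ} {n : Fin m → ℕ} {κ : Fin m → Fin t → ℕ}
    (B : (∀ ℓ, Fin (n ℓ)) → ℂ)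
    (P : ∀ ℓ, Matrix (Fin (n ℓ)) ((s : Fin t) × Fin (κ ℓ s)) ℂ) :
    (∀ ℓ, (s : Fin t) × Fin (κ ℓ s)) → ℂ :=
  fun i => ∑ j : ∀ ℓ, Fin (n ℓ), (∏ ℓ, star (P ℓ (j ℓ) (i ℓ))) * B j

/-- The block-diagonal objective
`f(P₁,…,Pₘ) = ‖BDiag(B ×₁ P₁ᴴ ×₂ ⋯ ×ₘ Pₘᴴ)‖_F²`: the sum of `|T(i)|²` over all
multi-indices `i` whose components all lie in the same diagonal block. -/
noncomputable def fObj {m t : ℕ} {n : Fin m → ℕ} {κ : Fin m → Fin t → ℕ}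
    (B : (∀ ℓ, Fin (n ℓ)) → ℂ)
    (P : ∀ ℓ, Matrix (Fin (n ℓ)) ((s : Fin t) × Fin (κ ℓ s)) ℂ) : ℝ :=
  ∑ i : ∀ ℓ, (s : Fin t) × Fin (κ ℓ s),
    if ∃ s : Fin t, ∀ ℓ, (i ℓ).1 = s then Complex.normSq (multiProd B P i) else 0

/-- The tensor `B_{ℓ,s} = B ×₁ P_{1s}ᴴ ⋯ ×_{ℓ-1} P_{ℓ-1,s}ᴴ ×_{ℓ+1} P_{ℓ+1,s}ᴴ ⋯ ×ₘ P_{ms}ᴴ`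
(mode products by the `s`-th column blocks over every mode except `ℓ`), evaluated at the index
whose `ℓ`-th component is `a` and whose other components are given by `ih`. -/
noncomputable def Bls {m t : ℕ} {n : Fin m → ℕ} {κ : Fin m → Fin t → ℕ}
    (B : (∀ ℓ, Fin (n ℓ)) → ℂ)
    (P : ∀ ℓ, Matrix (Fin (n ℓ)) ((s : Fin t) × Fin (κ ℓ s)) ℂ)
    (ℓ : Fin m) (s : Fin t) (a : Fin (n ℓ))
    (ih : ∀ r : {r : Fin m // r ≠ ℓ}, Fin (κ r.1 s)) : ℂ :=
  ∑ j : ∀ r, Fin (n r),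
    if j ℓ = a then (∏ r : {r : Fin m // r ≠ ℓ}, star (P r.1 (j r.1) ⟨s, ih r⟩)) * B j else 0

/-- The matrix `H_{ℓs}(P₁,…,Pₘ) ∈ ℂ^{n_ℓ×n_ℓ}` with `(a,b)`-entry
`Σ_î B_{ℓ,s}(î[ℓ↦a])·conj(B_{ℓ,s}(î[ℓ↦b]))`, summed over multi-indices `î` with the
`ℓ`-th coordinate ignored. -/
noncomputable def Hmat {m t : ℕ} {n : Fin m → ℕ} {κ : Fin m → Fin t → ℕ}
    (B : (∀ ℓ, Fin (n ℓ)) → ℂ)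
    (P : ∀ ℓ, Matrix (Fin (n ℓ)) ((s : Fin t) × Fin (κ ℓ s)) ℂ)
    (ℓ : Fin m) (s : Fin t) : Matrix (Fin (n ℓ)) (Fin (n ℓ)) ℂ :=
  Matrix.of fun a b =>
    ∑ ih : ∀ r : {r : Fin m // r ≠ ℓ}, Fin (κ r.1 s),
      Bls B P ℓ s a ih * star (Bls B P ℓ s b ih)

/-- The partial Euclidean gradient `ℋ_ℓ(P₁,…,Pₘ) ∈ ℂ^{n_ℓ×k_ℓ}` of `fObj` with respect to
`P ℓ` (for the real inner product `⟨X,Y⟩ = Re tr(Yᴴ X)`): its `s`-th column block is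
`2 · H_{ℓs}(P₁,…,Pₘ) · P_{ℓs}`. -/
noncomputable def scrH {m t : ℕ} {n : Fin m → ℕ} {κ : Fin m → Fin t → ℕ}
    (B : (∀ ℓ, Fin (n ℓ)) → ℂ)
    (P : ∀ ℓ, Matrix (Fin (n ℓ)) ((s : Fin t) × Fin (κ ℓ s)) ℂ)
    (ℓ : Fin m) : Matrix (Fin (n ℓ)) ((s : Fin t) × Fin (κ ℓ s)) ℂ :=
  Matrix.of fun a sc => 2 * ∑ b, Hmat B P ℓ sc.1 a b * P ℓ b sc

section AuxNPDo
variable {m t : ℕ} {n : Fin m → ℕ} {κ : Fin m → Fin t → ℕ}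

def blockEquiv (s : Fin t) :
    (∀ r, Fin (κ r s)) ≃ {i : ∀ r, (s' : Fin t) × Fin (κ r s') // ∀ r, (i r).1 = s} where
  toFun c := ⟨fun r => ⟨s, c r⟩, fun r => rfl⟩
  invFun i r := Fin.cast (congrArg (κ r) (i.2 r)) (i.1 r).2
  left_inv c := rfl
  right_inv i := Subtype.ext (funext fun r =>
    Sigma.ext (i.2 r).symm ((Fin.heq_ext_iff (congrArg (κ r) (i.2 r)).symm).mpr rfl))

lemma diag_sum (ℓ : Fin m) (g : (∀ r, (s : Fin t) × Fin (κ r s)) → ℝ) :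
    (∑ i : ∀ r, (s : Fin t) × Fin (κ r s), if ∃ s, ∀ r, (i r).1 = s then g i else 0)
      = ∑ s : Fin t, ∑ c : ∀ r, Fin (κ r s), g (fun r => ⟨s, c r⟩) := by
  have h1 : ∀ i : ∀ r, (s : Fin t) × Fin (κ r s),
      (if ∃ s, ∀ r, (i r).1 = s then g i else 0)
        = ∑ s : Fin t, if ∀ r, (i r).1 = s then g i else 0 := by
    intro i
    by_cases h : ∃ s, ∀ r, (i r).1 = s
    · obtain ⟨s₀, hs₀⟩ := h
      have hp : ∀ s : Fin t, (∀ r, (i r).1 = s) ↔ s = s₀ :=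
        fun s => ⟨fun h' => ((h' ℓ).symm.trans (hs₀ ℓ)), fun h' => h' ▸ hs₀⟩
      rw [if_pos ⟨s₀, hs₀⟩]
      simp only [hp]
      rw [Finset.sum_ite_eq' Finset.univ s₀ (fun _ => g i)]
      simp
    · rw [if_neg h, eq_comm]
      exact Finset.sum_eq_zero fun s _ => if_neg (fun h' => h ⟨s, h'⟩)
  rw [Finset.sum_congr rfl (fun i _ => h1 i), Finset.sum_comm]
  refine Finset.sum_congr rfl fun s _ => ?_
  rw [← Finset.sum_filter, ← Finset.sum_subtype_eq_sum_filter]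
  rw [show (Finset.univ.subtype fun i : ∀ r, (s' : Fin t) × Fin (κ r s') => ∀ r, (i r).1 = s)
      = Finset.univ from Finset.subtype_univ _]
  exact (Fintype.sum_equiv (blockEquiv s) (fun c => g fun r => ⟨s, c r⟩) (fun x => g x.1) (fun c => rfl)).symm

variable {m t : ℕ} {n : Fin m → ℕ} {κ : Fin m → Fin t → ℕ}

lemma prod_split (ℓ : Fin m) (f : Fin m → ℂ) :
    ∏ r, f r = f ℓ * ∏ r : {r : Fin m // r ≠ ℓ}, f r.1 := by
  rw [← Finset.prod_subtype (Finset.univ.erase ℓ) (fun x => by simp) f]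
  exact (Finset.mul_prod_erase Finset.univ f (Finset.mem_univ ℓ)).symm

noncomputable def cfun (B : (∀ ℓ, Fin (n ℓ)) → ℂ)
    (P : ∀ ℓ, Matrix (Fin (n ℓ)) ((s : Fin t) × Fin (κ ℓ s)) ℂ) (ℓ : Fin m)
    (Q : Matrix (Fin (n ℓ)) ((s : Fin t) × Fin (κ ℓ s)) ℂ)
    (sc : (s : Fin t) × Fin (κ ℓ s))
    (ih : ∀ r : {r : Fin m // r ≠ ℓ}, Fin (κ r.1 sc.1)) : ℂ :=
  ∑ a, star (Q a sc) * Bls B P ℓ sc.1 a ih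

lemma multiProd_update (B : (∀ ℓ, Fin (n ℓ)) → ℂ)
    (P : ∀ ℓ, Matrix (Fin (n ℓ)) ((s : Fin t) × Fin (κ ℓ s)) ℂ) (ℓ : Fin m)
    (Q : Matrix (Fin (n ℓ)) ((s : Fin t) × Fin (κ ℓ s)) ℂ)
    (s : Fin t) (c : ∀ r, Fin (κ r s)) :
    multiProd B (Function.update P ℓ Q) (fun r => ⟨s, c r⟩)
      = cfun B P ℓ Q ⟨s, c ℓ⟩ (fun r => c r.1) := by
  unfold multiProd cfun Bls
  simp only [Finset.mul_sum]
  rw [Finset.sum_comm]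
  refine Finset.sum_congr rfl fun j _ => ?_
  rw [Finset.sum_eq_single (j ℓ)]
  · rw [if_pos rfl, prod_split ℓ (fun r => star (Function.update P ℓ Q r (j r) ⟨s, c r⟩))]
    simp only [Function.update_self]
    have : ∀ r : {r : Fin m // r ≠ ℓ},
        star (Function.update P ℓ Q r.1 (j r.1) ⟨s, c r.1⟩) = star (P r.1 (j r.1) ⟨s, c r.1⟩) :=
      fun r => by rw [Function.update_of_ne r.2]
    rw [Finset.prod_congr rfl fun r _ => this r]
    ring
  · intro b _ hb
    rw [if_neg (fun h => hb h.symm), mul_zero]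
  · intro h
    exact absurd (Finset.mem_univ _) h

lemma fObj_update (B : (∀ ℓ, Fin (n ℓ)) → ℂ)
    (P : ∀ ℓ, Matrix (Fin (n ℓ)) ((s : Fin t) × Fin (κ ℓ s)) ℂ) (ℓ : Fin m)
    (Q : Matrix (Fin (n ℓ)) ((s : Fin t) × Fin (κ ℓ s)) ℂ) :
    fObj B (Function.update P ℓ Q)
      = ∑ sc : (s : Fin t) × Fin (κ ℓ s),
          ∑ ih : ∀ r : {r : Fin m // r ≠ ℓ}, Fin (κ r.1 sc.1),
            Complex.normSq (cfun B P ℓ Q sc ih) := by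
  rw [fObj, diag_sum ℓ, ← Finset.univ_sigma_univ, Finset.sum_sigma]
  refine Finset.sum_congr rfl fun s _ => ?_
  refine Eq.trans ?_ (Fintype.sum_prod_type
    fun p : Fin (κ ℓ s) × ((r : {r : Fin m // r ≠ ℓ}) → Fin (κ r.1 s)) =>
      Complex.normSq (cfun B P ℓ Q ⟨s, p.1⟩ p.2))
  refine Fintype.sum_equiv (Equiv.piSplitAt ℓ fun r => Fin (κ r s))
    (fun c => Complex.normSq (multiProd B (Function.update P ℓ Q) fun r => ⟨s, c r⟩))
    (fun p => Complex.normSq (cfun B P ℓ Q ⟨s, p.1⟩ p.2)) fun c => ?_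
  exact congrArg Complex.normSq (multiProd_update B P ℓ Q s c)

lemma sum_swap_abc {α β γ : Type*} [Fintype α] [Fintype β] [Fintype γ] (f : α → β → γ → ℂ) :
    ∑ a : α, ∑ b : β, ∑ c : γ, f a b c = ∑ c, ∑ b, ∑ a, f a b c := by
  rw [Finset.sum_comm]
  exact (Finset.sum_congr rfl fun b _ => Finset.sum_comm).trans Finset.sum_comm

lemma trace_scrH (B : (∀ ℓ, Fin (n ℓ)) → ℂ)
    (P : ∀ ℓ, Matrix (Fin (n ℓ)) ((s : Fin t) × Fin (κ ℓ s)) ℂ) (ℓ : Fin m)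
    (Q : Matrix (Fin (n ℓ)) ((s : Fin t) × Fin (κ ℓ s)) ℂ) :
    Matrix.trace (Qᴴ * scrH B P ℓ)
      = 2 * ∑ sc : (s : Fin t) × Fin (κ ℓ s),
          ∑ ih : ∀ r : {r : Fin m // r ≠ ℓ}, Fin (κ r.1 sc.1),
            cfun B P ℓ Q sc ih * star (cfun B P ℓ (P ℓ) sc ih) := by
  rw [Matrix.trace, Finset.mul_sum]
  refine Finset.sum_congr rfl fun sc _ => ?_
  simp only [Matrix.diag_apply, Matrix.mul_apply, Matrix.conjTranspose_apply, scrH, Hmat,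
    Matrix.of_apply, cfun, star_sum, star_mul', star_star]
  simp only [Finset.mul_sum, Finset.sum_mul]
  rw [sum_swap_abc]
  refine Finset.sum_congr rfl fun ih _ => Finset.sum_congr rfl fun b _ =>
    Finset.sum_congr rfl fun a _ => ?_
  ring

end AuxNPDo

/-- Theorem 3.1, NPDo Ansatz for the block-diagonal objective:
if `Re tr(P̂_ℓᴴ ℋ_ℓ(P₁,…,Pₘ)) ≥ Re tr(P_ℓᴴ ℋ_ℓ(P₁,…,Pₘ)) + η` then replacing `P ℓ` by `P̂ ℓ`
increases the objective by at least `η`. -/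
theorem stmt_7 (m t : ℕ) (hm : 1 ≤ m) (ht : 1 ≤ t)
    (n : Fin m → ℕ) (hn : ∀ ℓ, 1 ≤ n ℓ)
    (κ : Fin m → Fin t → ℕ) (hκ : ∀ ℓ s, 1 ≤ κ ℓ s)
    (hkn : ∀ ℓ, (∑ s, κ ℓ s) ≤ n ℓ)
    (B : (∀ ℓ, Fin (n ℓ)) → ℂ)
    (P : ∀ ℓ, Matrix (Fin (n ℓ)) ((s : Fin t) × Fin (κ ℓ s)) ℂ)
    (ℓ : Fin m) (Phat : Matrix (Fin (n ℓ)) ((s : Fin t) × Fin (κ ℓ s)) ℂ) (η : ℝ)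
    (hineq : (Matrix.trace ((P ℓ)ᴴ * scrH B P ℓ)).re + η
        ≤ (Matrix.trace (Phatᴴ * scrH B P ℓ)).re) :
    fObj B P + η ≤ fObj B (Function.update P ℓ Phat) := by

  have hfup := fObj_update B P ℓ Phat
  have hfP : fObj B P = ∑ sc : (s : Fin t) × Fin (κ ℓ s),
      ∑ ih : ∀ r : {r : Fin m // r ≠ ℓ}, Fin (κ r.1 sc.1),
        Complex.normSq (cfun B P ℓ (P ℓ) sc ih) := by
    have h := fObj_update B P ℓ (P ℓ)
    rwa [Function.update_eq_self] at h
  set D : ℝ := ∑ sc : (s : Fin t) × Fin (κ ℓ s),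
      ∑ ih : ∀ r : {r : Fin m // r ≠ ℓ}, Fin (κ r.1 sc.1),
        (cfun B P ℓ Phat sc ih * star (cfun B P ℓ (P ℓ) sc ih)).re with hD
  have two_re : ∀ S : ℂ, ((2:ℂ) * S).re = 2 * S.re := fun S => by
    rw [Complex.mul_re]; norm_num
  have h1 : (Matrix.trace (Phatᴴ * scrH B P ℓ)).re = 2 * D := by
    rw [trace_scrH B P ℓ Phat, two_re, hD, Complex.re_sum]
    exact congrArg (2 * ·) (Finset.sum_congr rfl fun sc _ => Complex.re_sum _ _)
  have h2 : (Matrix.trace ((P ℓ)ᴴ * scrH B P ℓ)).re = 2 * fObj B P := by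
    rw [trace_scrH B P ℓ (P ℓ), two_re, Complex.re_sum, hfP]
    refine congrArg (2 * ·) (Finset.sum_congr rfl fun sc _ => ?_)
    rw [Complex.re_sum]
    refine Finset.sum_congr rfl fun ih _ => ?_
    rw [show (star (cfun B P ℓ (P ℓ) sc ih) : ℂ)
        = (starRingEnd ℂ) (cfun B P ℓ (P ℓ) sc ih) from rfl, Complex.mul_conj,
      Complex.ofReal_re]
  have hsum : 2 * D ≤ fObj B (Function.update P ℓ Phat) + fObj B P := by
    rw [hfup, hfP, hD, Finset.mul_sum, ← Finset.sum_add_distrib]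
    refine Finset.sum_le_sum fun sc _ => ?_
    rw [Finset.mul_sum, ← Finset.sum_add_distrib]
    refine Finset.sum_le_sum fun ih _ => ?_
    set x := cfun B P ℓ Phat sc ih
    set y := cfun B P ℓ (P ℓ) sc ih
    have h := Complex.normSq_nonneg (x - y)
    have e : Complex.normSq (x - y)
        = Complex.normSq x + Complex.normSq y - 2 * (x * star y).re := by
      simp [Complex.normSq_sub, Complex.star_def]
    linarith
  linarith
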